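/- For any atoms a and b, the class Av(a·(arch over b)) is Wilf-equivalent to Av(arch over (ba)). -/

import Mathlib

/-- Plane forests, modelling non-crossing arch systems: `node c r` is an atom
(an arch over the contents `c`) followed by the rest of the forest `r`. -/
inductive PF : Type
  | nil : PF
  | node : PF → PF → PF
  deriving DecidableEq

namespace PF

/-- number of arches (nodes) -/
def size : PF → ℕ
  | nil => 0
  | node c r => 1 + c.size + r.size

/-- concatenation of arch systems -/
def append : PF → PF → PF
  | nil, q => q
  | node c r, q => node c (r.append q)

instance : Append PF := ⟨PF.append⟩

/-- an atom: a nonempty arch system with a single outermost arch -/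
def IsAtom (a : PF) : Prop := ∃ c, a = node c nil

/-- an atom or the empty arch system -/
def AtomOrNil (a : PF) : Prop := a = nil ∨ IsAtom a

/-- One-step arch deletion: `Del X Y` means `Y` is obtained from `X` by deleting one arch
(the contents of a deleted arch are spliced in its place). -/
inductive Del : PF → PF → Prop
  | root (c r : PF) : Del (node c r) (c ++ r)
  | inside {c c' : PF} (r : PF) : Del c c' → Del (node c r) (node c' r)
  | rest {r r' : PF} (c : PF) : Del r r' → Del (node c r) (node c r')

/-- `Contains X A` : `A` is a substructure (subsystem) of `X`. -/
def Contains (X A : PF) : Prop := Relation.ReflTransGen Del X A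

/-- the class of arch systems avoiding `A` -/
def Av (A : PF) : Set PF := {X | ¬ Contains X A}

/-- Wilf-equivalence: same counting sequence by number of arches. -/
def WilfEq (A B : PF) : Prop :=
  ∀ n, Set.ncard {X | X ∈ Av A ∧ X.size = n} = Set.ncard {X | X ∈ Av B ∧ X.size = n}

/-- the generating function of `Av A`, counting by number of arches -/
noncomputable def F (A : PF) : PowerSeries ℚ :=
  PowerSeries.mk fun n => (Set.ncard {X | X ∈ Av A ∧ X.size = n} : ℚ)

end PF

/-- concatenation of a list of arch systems -/
def concatList (L : List PF) : PF := L.foldr (· ++ ·) PF.nil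

/-- The equivalence relation `∼` whose classes are cohorts: the finest equivalence
relation satisfying the four closure rules. -/
inductive Sim : PF → PF → Prop
  | refl (A : PF) : Sim A A
  | symm {A B : PF} : Sim A B → Sim B A
  | trans {A B C : PF} : Sim A B → Sim B C → Sim A C
  | arch {A B : PF} : Sim A B → Sim (PF.node A PF.nil) (PF.node B PF.nil)
  | subst {a b : PF} (P Q : PF) : PF.AtomOrNil a → PF.AtomOrNil b → Sim a b →
      Sim (P ++ a ++ Q) (P ++ b ++ Q)
  | comm {a b : PF} (P Q : PF) : PF.AtomOrNil a → PF.AtomOrNil b →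
      Sim (P ++ a ++ b ++ Q) (P ++ b ++ a ++ Q)
  | rot {a b c : PF} : PF.AtomOrNil a → PF.AtomOrNil b → PF.AtomOrNil c →
      Sim (a ++ PF.node (b ++ c) PF.nil) (PF.node (a ++ b) PF.nil ++ c)

/-- the nest of `n` nested arches -/
def nest : ℕ → PF
  | 0 => PF.nil
  | n + 1 => PF.node (nest n) PF.nil

/-- the `n`-th Motzkin number -/
def motzkin (n : ℕ) : ℕ := ∑ k ∈ Finset.range (n + 1), n.choose (2 * k) * catalan k

/-- the truncated continued fractions `C_n` of the Catalan generating function -/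
noncomputable def Cfun : ℕ → PowerSeries ℚ
  | 0 => 1
  | n + 1 => (1 - PowerSeries.X * Cfun n)⁻¹

/-- a balanced parenthesis word (Dyck word): `true` = opening, `false` = closing -/
def BalancedW (w : List Bool) : Prop :=
  w.count true = w.count false ∧ ∀ p : List Bool, p <+: w → p.count false ≤ p.count true

/-- the height of a Dyck path -/
def wheight (w : List Bool) : ℕ :=
  (w.inits.map fun p => p.count true - p.count false).foldr max 0

/-- One-step deletion of a matched pair of parentheses (an arch) in a word. -/
inductive WDel : List Bool → List Bool → Prop
  | mk (x y z : List Bool) : BalancedW y →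
      WDel (x ++ [true] ++ y ++ [false] ++ z) (x ++ y ++ z)

/-- `l` avoids the pattern 231 -/
def Avoids231 (l : List ℕ) : Prop := ¬ ∃ a b c : ℕ, [b, c, a].Sublist l ∧ a < b ∧ b < c

/-- `p` and `s` are order-isomorphic sequences -/
def OrdIso (p s : List ℕ) : Prop :=
  p.length = s.length ∧ ∀ i j : ℕ, i < p.length → j < p.length →
    (p.getD i 0 < p.getD j 0 ↔ s.getD i 0 < s.getD j 0)

namespace PF

@[simp] lemma nil_append (q : PF) : nil ++ q = q := rfl
@[simp] lemma node_append (c r q : PF) : node c r ++ q = node c (r ++ q) := rfl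

@[simp] lemma append_nil (p : PF) : p ++ nil = p := by
  induction p with
  | nil => rfl
  | node c r ihc ihr => rw [node_append, ihr]

lemma append_assoc (p q r : PF) : p ++ q ++ r = p ++ (q ++ r) := by
  induction p with
  | nil => rfl
  | node c t ihc iht => rw [node_append, node_append, node_append, iht]

@[simp] lemma size_append (p q : PF) : (p ++ q).size = p.size + q.size := by
  induction p with
  | nil => simp [size]
  | node c r ihc ihr => rw [node_append]; simp only [size, ihr]; ring

lemma append_eq_nil_iff {p q : PF} : p ++ q = nil ↔ p = nil ∧ q = nil := by
  cases p <;> simp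

lemma Del.append_right {r r' : PF} (c : PF) (h : Del r r') : Del (c ++ r) (c ++ r') := by
  induction c with
  | nil => simpa using h
  | node x y ihx ihy => exact Del.rest x ihy

lemma Del.append_left {c c' : PF} (h : Del c c') (r : PF) : Del (c ++ r) (c' ++ r) := by
  induction h with
  | root x y => rw [node_append, append_assoc]; exact Del.root x (y ++ r)
  | inside y h ih => exact Del.inside _ h
  | rest x h ih => exact Del.rest x ih

lemma Contains.node_left {C C' : PF} (h : Contains C C') (R : PF) :
    Contains (node C R) (node C' R) :=
  Relation.ReflTransGen.lift (fun X => node X R) (fun _ _ hd => Del.inside R hd) _ _ h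

lemma Contains.node_right (C : PF) {R R' : PF} (h : Contains R R') :
    Contains (node C R) (node C R') :=
  Relation.ReflTransGen.lift (fun X => node C X) (fun _ _ hd => Del.rest C hd) _ _ h

lemma Contains.app_left {C C' : PF} (h : Contains C C') (R : PF) :
    Contains (C ++ R) (C' ++ R) :=
  Relation.ReflTransGen.lift (fun X => X ++ R) (fun _ _ hd => Del.append_left hd R) _ _ h

lemma Contains.app_right (C : PF) {R R' : PF} (h : Contains R R') :
    Contains (C ++ R) (C ++ R') :=
  Relation.ReflTransGen.lift (fun X => C ++ X) (fun _ _ hd => Del.append_right C hd) _ _ h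

lemma contains_rfl (X : PF) : Contains X X := Relation.ReflTransGen.refl

lemma Contains.trans' {X Y Z : PF} (h : Contains X Y) (h' : Contains Y Z) : Contains X Z :=
  Relation.ReflTransGen.trans h h'

lemma contains_nil (X : PF) : Contains X nil := by
  induction X with
  | nil => exact contains_rfl nil
  | node c r ihc ihr =>
    have h1 : Contains (c ++ r) c := by
      have := Contains.app_right c ihr
      simpa using this
    exact Relation.ReflTransGen.head (Del.root c r) (h1.trans' ihc)

lemma contains_nil_left {P : PF} (h : Contains nil P) : P = nil := by
  rcases Relation.ReflTransGen.cases_head h with h | ⟨Y, hd, _⟩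
  · exact h.symm
  · cases hd

def embB : PF → PF → Bool
  | nil, P => P == nil
  | node C R, P =>
    embB (C ++ R) P ||
      (match P with
       | nil => false
       | node P₁ P₂ => embB C P₁ && embB R P₂)
termination_by X _ => X.size
decreasing_by
  all_goals (simp only [size, size_append]; omega)

lemma embB_node (C R P : PF) : embB (node C R) P = true ↔
    embB (C ++ R) P = true ∨
      ∃ P₁ P₂, P = node P₁ P₂ ∧ embB C P₁ = true ∧ embB R P₂ = true := by
  conv_lhs => rw [embB.eq_def]
  cases P with
  | nil => simp
  | node P₁ P₂ =>
    simp only [Bool.or_eq_true, Bool.and_eq_true]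
    constructor
    · rintro (h | ⟨h1, h2⟩)
      · exact Or.inl h
      · exact Or.inr ⟨P₁, P₂, rfl, h1, h2⟩
    · rintro (h | ⟨Q₁, Q₂, hQ, h1, h2⟩)
      · exact Or.inl h
      · cases hQ; exact Or.inr ⟨h1, h2⟩

lemma embB_refl (X : PF) : embB X X = true := by
  induction X with
  | nil => rw [embB.eq_def]; simp
  | node C R ihC ihR => exact (embB_node C R _).2 (Or.inr ⟨C, R, rfl, ihC, ihR⟩)

lemma embB_of_del : ∀ (n : ℕ) (X Y P : PF), X.size ≤ n → Del X Y → embB Y P = true →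
    embB X P = true := by
  intro n
  induction n with
  | zero => intro X Y P hs hd; cases hd <;> simp [size] at hs
  | succ n ih =>
    intro X Y P hs hd he
    cases hd with
    | root c r => exact (embB_node c r P).2 (Or.inl he)
    | @inside c c' r hdel =>
      rcases (embB_node c' r P).1 he with h | ⟨P₁, P₂, hP, h1, h2⟩
      · refine (embB_node c r P).2 (Or.inl ?_)
        refine ih (c ++ r) (c' ++ r) P ?_ (Del.append_left hdel r) h
        simp [size] at hs ⊢; omega
      · refine (embB_node c r P).2 (Or.inr ⟨P₁, P₂, hP, ?_, h2⟩)
        refine ih c c' P₁ ?_ hdel h1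
        simp [size] at hs; omega
    | @rest r r' c hdel =>
      rcases (embB_node c r' P).1 he with h | ⟨P₁, P₂, hP, h1, h2⟩
      · refine (embB_node c r P).2 (Or.inl ?_)
        refine ih (c ++ r) (c ++ r') P ?_ (Del.append_right c hdel) h
        simp [size] at hs ⊢; omega
      · refine (embB_node c r P).2 (Or.inr ⟨P₁, P₂, hP, h1, ?_⟩)
        refine ih r r' P₂ ?_ hdel h2
        simp [size] at hs; omega

lemma contains_of_embB : ∀ (n : ℕ) (X P : PF), X.size ≤ n → embB X P = true →
    Contains X P := by
  intro n
  induction n with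
  | zero =>
    intro X P hs he
    cases X with
    | nil =>
      have : P = nil := by rw [embB.eq_def] at he; simpa using he
      subst this; exact contains_rfl nil
    | node C R => simp [size] at hs
  | succ n ih =>
    intro X P hs he
    cases X with
    | nil =>
      have : P = nil := by rw [embB.eq_def] at he; simpa using he
      subst this; exact contains_rfl nil
    | node C R =>
      rcases (embB_node C R P).1 he with h | ⟨P₁, P₂, hP, h1, h2⟩
      · refine Relation.ReflTransGen.head (Del.root C R) ?_
        refine ih (C ++ R) P ?_ h
        simp [size] at hs ⊢; omega
      · subst hP
        have hC : Contains C P₁ := ih C P₁ (by simp [size] at hs; omega) h1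
        have hR : Contains R P₂ := ih R P₂ (by simp [size] at hs; omega) h2
        exact (hC.node_left R).trans' (Contains.node_right P₁ hR)

lemma contains_iff_embB {X P : PF} : Contains X P ↔ embB X P = true := by
  constructor
  · intro h
    induction h using Relation.ReflTransGen.head_induction_on with
    | refl => exact embB_refl P
    | head hd _ ih => exact embB_of_del _ _ _ _ le_rfl hd ih
  · intro h; exact contains_of_embB X.size X P le_rfl h

instance (X P : PF) : Decidable (Contains X P) :=
  decidable_of_iff _ contains_iff_embB.symm

lemma contains_node_iff {C R P : PF} : Contains (node C R) P ↔
    Contains (C ++ R) P ∨ ∃ P₁ P₂, P = node P₁ P₂ ∧ Contains C P₁ ∧ Contains R P₂ := by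
  simp only [contains_iff_embB]
  exact embB_node C R P

lemma contains_append_iff_aux : ∀ (n : ℕ) (X Y P : PF), X.size ≤ n →
    (Contains (X ++ Y) P ↔ ∃ P₁ P₂, P = P₁ ++ P₂ ∧ Contains X P₁ ∧ Contains Y P₂) := by
  intro n
  induction n with
  | zero =>
    intro X Y P hs
    cases X with
    | node C R => simp [size] at hs
    | nil =>
      simp only [nil_append]
      constructor
      · intro h; exact ⟨nil, P, rfl, contains_rfl nil, h⟩
      · rintro ⟨P₁, P₂, rfl, h1, h2⟩
        rw [contains_nil_left h1]; simpa using h2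
  | succ n ih =>
    intro X Y P hs
    cases X with
    | nil =>
      simp only [nil_append]
      constructor
      · intro h; exact ⟨nil, P, rfl, contains_rfl nil, h⟩
      · rintro ⟨P₁, P₂, rfl, h1, h2⟩
        rw [contains_nil_left h1]; simpa using h2
    | node c r =>
      rw [node_append, contains_node_iff]
      have hcr : (c ++ r).size ≤ n := by simp [size] at hs ⊢; omega
      have hrn : r.size ≤ n := by simp [size] at hs; omega
      constructor
      · rintro (h | ⟨P₁, P₂, rfl, h1, h2⟩)
        · rw [← append_assoc] at h
          rcases (ih (c ++ r) Y P hcr).1 h with ⟨Q₁, Q₂, rfl, hq1, hq2⟩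
          exact ⟨Q₁, Q₂, rfl, Relation.ReflTransGen.head (Del.root c r) hq1, hq2⟩
        · rcases (ih r Y P₂ hrn).1 h2 with ⟨A, B, rfl, hA, hB⟩
          refine ⟨node P₁ A, B, rfl, ?_, hB⟩
          exact (h1.node_left r).trans' (Contains.node_right P₁ hA)
      · rintro ⟨P₁, P₂, rfl, h1, h2⟩
        rcases contains_node_iff.1 h1 with h | ⟨q₁, q₂, rfl, hq1, hq2⟩
        · left
          rw [← append_assoc]
          exact (ih (c ++ r) Y _ hcr).2 ⟨P₁, P₂, rfl, h, h2⟩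
        · right
          refine ⟨q₁, q₂ ++ P₂, rfl, hq1, ?_⟩
          exact (ih r Y _ hrn).2 ⟨q₂, P₂, rfl, hq2, h2⟩

lemma contains_append_iff {X Y P : PF} :
    Contains (X ++ Y) P ↔ ∃ P₁ P₂, P = P₁ ++ P₂ ∧ Contains X P₁ ∧ Contains Y P₂ :=
  contains_append_iff_aux X.size X Y P le_rfl

lemma contains_append_left (X Y : PF) : Contains (X ++ Y) X :=
  contains_append_iff.2 ⟨X, nil, (append_nil X).symm, contains_rfl X, contains_nil Y⟩

lemma contains_append_right (X Y : PF) : Contains (X ++ Y) Y :=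
  contains_append_iff.2 ⟨nil, Y, rfl, contains_nil X, contains_rfl Y⟩

lemma arch_contains (P : PF) : Contains (node P nil) P := by
  refine Relation.ReflTransGen.head (Del.root P nil) ?_
  rw [append_nil]

end PF
namespace PF

lemma append_eq_arch {P₁ P₂ P : PF} (h : P₁ ++ P₂ = node P nil) :
    (P₁ = nil ∧ P₂ = node P nil) ∨ (P₁ = node P nil ∧ P₂ = nil) := by
  cases P₁ with
  | nil => exact Or.inl ⟨rfl, by simpa using h⟩
  | node x y =>
    rw [node_append] at h
    injection h with h1 h2
    rcases append_eq_nil_iff.1 h2 with ⟨hy, hP⟩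
    subst h1; subst hy; subst hP
    exact Or.inr ⟨rfl, rfl⟩

lemma contains_arch_iff {C R P : PF} :
    Contains (node C R) (node P nil) ↔
      Contains C P ∨ Contains C (node P nil) ∨ Contains R (node P nil) := by
  rw [contains_node_iff]
  constructor
  · rintro (h | ⟨P₁, P₂, hP, h1, h2⟩)
    · rcases contains_append_iff.1 h with ⟨Q₁, Q₂, hQ, hq1, hq2⟩
      rcases append_eq_arch hQ.symm with ⟨rfl, rfl⟩ | ⟨rfl, rfl⟩
      · exact Or.inr (Or.inr hq2)
      · exact Or.inr (Or.inl hq1)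
    · injection hP with e1 e2; subst e1; subst e2
      exact Or.inl h1
  · rintro (h | h | h)
    · exact Or.inr ⟨P, nil, rfl, h, contains_nil R⟩
    · exact Or.inl (contains_append_iff.2 ⟨node P nil, nil, (append_nil _).symm, h, contains_nil R⟩)
    · exact Or.inl (contains_append_iff.2 ⟨nil, node P nil, rfl, contains_nil C, h⟩)

lemma append_eq_W {P₁ P₂ γ δ : PF} (h : P₁ ++ P₂ = node γ (node δ nil)) :
    (P₁ = nil ∧ P₂ = node γ (node δ nil)) ∨ (P₁ = node γ nil ∧ P₂ = node δ nil) ∨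
      (P₁ = node γ (node δ nil) ∧ P₂ = nil) := by
  cases P₁ with
  | nil => exact Or.inl ⟨rfl, by simpa using h⟩
  | node x y =>
    rw [node_append] at h
    injection h with h1 h2
    subst h1
    rcases append_eq_arch h2 with ⟨rfl, rfl⟩ | ⟨rfl, rfl⟩
    · exact Or.inr (Or.inl ⟨rfl, rfl⟩)
    · exact Or.inr (Or.inr ⟨rfl, rfl⟩)

lemma contains_W_iff {C R γ δ : PF} :
    Contains (node C R) (node γ (node δ nil)) ↔
      Contains C (node γ (node δ nil)) ∨ Contains R (node γ (node δ nil)) ∨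
        (Contains C γ ∧ Contains R (node δ nil)) := by
  rw [contains_node_iff]
  constructor
  · rintro (h | ⟨P₁, P₂, hP, h1, h2⟩)
    · rcases contains_append_iff.1 h with ⟨Q₁, Q₂, hQ, hq1, hq2⟩
      rcases append_eq_W hQ.symm with ⟨rfl, rfl⟩ | ⟨rfl, rfl⟩ | ⟨rfl, rfl⟩
      · exact Or.inr (Or.inl hq2)
      · exact Or.inr (Or.inr ⟨hq1.trans' (arch_contains γ), hq2⟩)
      · exact Or.inl hq1
    · injection hP with e1 e2; subst e1; subst e2
      exact Or.inr (Or.inr ⟨h1, h2⟩)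
  · rintro (h | h | ⟨h1, h2⟩)
    · exact Or.inl (contains_append_iff.2 ⟨_, nil, (append_nil _).symm, h, contains_nil R⟩)
    · exact Or.inl (contains_append_iff.2 ⟨nil, _, rfl, contains_nil C, h⟩)
    · exact Or.inr ⟨γ, node δ nil, rfl, h1, h2⟩

/-- the pattern `node γ (node δ nil)` contains `γ` -/
lemma W_contains_left (γ δ : PF) : Contains (node γ (node δ nil)) γ :=
  Contains.trans' (Relation.ReflTransGen.head (Del.root γ (node δ nil)) (contains_rfl _))
    (contains_append_left γ (node δ nil))

lemma W_contains_right (γ δ : PF) : Contains (node γ (node δ nil)) (node δ nil) :=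
  Contains.trans' (Relation.ReflTransGen.head (Del.root γ (node δ nil)) (contains_rfl _))
    (contains_append_right γ (node δ nil))

end PF

open Finset in
def allPF : ℕ → Finset PF
  | 0 => {PF.nil}
  | n + 1 =>
    (Finset.range (n+1)).attach.biUnion fun k =>
      ((allPF k.1) ×ˢ (allPF (n - k.1))).image fun p => PF.node p.1 p.2
decreasing_by
  · exact Finset.mem_range.mp k.2
  · exact Nat.lt_succ_of_le (Nat.sub_le n k.1)

lemma size_eq_zero_iff {X : PF} : X.size = 0 ↔ X = PF.nil := by
  cases X <;> simp [PF.size]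

lemma mem_allPF : ∀ (n : ℕ) (X : PF), X ∈ allPF n ↔ X.size = n := by
  intro n
  induction n using Nat.strong_induction_on with
  | _ n ih =>
    intro X
    match n with
    | 0 =>
      rw [allPF]
      simp only [Finset.mem_singleton]
      rw [size_eq_zero_iff]
    | n + 1 =>
      rw [allPF]
      simp only [Finset.mem_biUnion, Finset.mem_attach, Finset.mem_image, Finset.mem_product,
        true_and, Subtype.exists, Finset.mem_range]
      constructor
      · rintro ⟨k, hk, ⟨C, R⟩, ⟨hC, hR⟩, rfl⟩
        rw [ih k hk C] at hC
        rw [ih (n - k) (Nat.lt_succ_of_le (Nat.sub_le n k)) R] at hR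
        simp only [PF.size, hC, hR]
        omega
      · intro hX
        cases X with
        | nil => simp [PF.size] at hX
        | node C R =>
          simp only [PF.size] at hX
          have hk : C.size < n + 1 := by omega
          refine ⟨C.size, hk, ⟨C, R⟩, ⟨?_, ?_⟩, rfl⟩
          · rw [ih C.size hk C]
          · rw [ih (n - C.size) (Nat.lt_succ_of_le (Nat.sub_le n C.size)) R]
            omega
open Finset in
lemma filter_allPF_split (pA pB pA' pB' p : PF → Prop)
    [DecidablePred pA] [DecidablePred pB] [DecidablePred pA'] [DecidablePred pB']
    [DecidablePred p]
    (hp : ∀ C R, p (PF.node C R) ↔ (pA C ∧ pB R) ∨ (pA' C ∧ pB' R))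
    (hd : ∀ C, ¬ (pA C ∧ pA' C)) (n : ℕ) :
    ((allPF (n+1)).filter p).card =
      ∑ k ∈ Finset.range (n+1),
        (((allPF k).filter pA).card * ((allPF (n-k)).filter pB).card
          + ((allPF k).filter pA').card * ((allPF (n-k)).filter pB').card) := by
  have hset : (allPF (n+1)).filter p =
      (Finset.range (n+1)).biUnion (fun k =>
        ((((allPF k).filter pA) ×ˢ ((allPF (n-k)).filter pB)) ∪
          (((allPF k).filter pA') ×ˢ ((allPF (n-k)).filter pB'))).image
            fun q => PF.node q.1 q.2) := by
    ext X
    simp only [mem_filter, mem_biUnion, mem_image, mem_union, mem_product, mem_range]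
    constructor
    · rintro ⟨hX, hpX⟩
      rw [mem_allPF] at hX
      cases X with
      | nil => simp [PF.size] at hX
      | node C R =>
        simp only [PF.size] at hX
        have hk : C.size < n + 1 := by omega
        refine ⟨C.size, hk, ⟨C, R⟩, ?_, rfl⟩
        have hC : C ∈ allPF C.size := (mem_allPF _ _).2 rfl
        have hR : R ∈ allPF (n - C.size) := (mem_allPF _ _).2 (by omega)
        rcases (hp C R).1 hpX with ⟨h1, h2⟩ | ⟨h1, h2⟩
        · exact Or.inl ⟨⟨hC, h1⟩, hR, h2⟩
        · exact Or.inr ⟨⟨hC, h1⟩, hR, h2⟩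
    · rintro ⟨k, hk, ⟨C, R⟩, hmem, rfl⟩
      have hsz : C.size = k ∧ R.size = n - k ∧ (pA C ∧ pB R ∨ pA' C ∧ pB' R) := by
        rcases hmem with ⟨⟨hC, h1⟩, hR, h2⟩ | ⟨⟨hC, h1⟩, hR, h2⟩
        · exact ⟨(mem_allPF _ _).1 hC, (mem_allPF _ _).1 hR, Or.inl ⟨h1, h2⟩⟩
        · exact ⟨(mem_allPF _ _).1 hC, (mem_allPF _ _).1 hR, Or.inr ⟨h1, h2⟩⟩
      refine ⟨(mem_allPF _ _).2 ?_, (hp C R).2 hsz.2.2⟩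
      simp only [PF.size, hsz.1, hsz.2.1]
      omega
  rw [hset, card_biUnion]
  · refine Finset.sum_congr rfl fun k hk => ?_
    rw [card_image_of_injective _ (fun q q' hqq => ?_), card_union_of_disjoint,
      card_product, card_product]
    · rw [Finset.disjoint_left]
      rintro ⟨C, R⟩ h1 h2
      rw [mem_product, mem_filter, mem_filter] at h1 h2
      exact hd C ⟨h1.1.2, h2.1.2⟩
    · injection hqq with e1 e2
      exact Prod.ext e1 e2
  · intro k hk l hl hkl
    rw [Function.onFun, Finset.disjoint_left]
    rintro X h1 h2
    simp only [mem_image, mem_union, mem_product, mem_filter] at h1 h2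
    rcases h1 with ⟨⟨C, R⟩, hm, rfl⟩
    rcases h2 with ⟨⟨C', R'⟩, hm', hEq⟩
    injection hEq with e1 e2
    have h1 : C.size = k := by
      rcases hm with ⟨⟨hC, _⟩, _⟩ | ⟨⟨hC, _⟩, _⟩ <;> exact (mem_allPF _ _).1 hC
    have h2 : C'.size = l := by
      rcases hm' with ⟨⟨hC, _⟩, _⟩ | ⟨⟨hC, _⟩, _⟩ <;> exact (mem_allPF _ _).1 hC
    have e3 : C' = C := e1
    rw [e3] at h2
    exact hkl (h1.symm.trans h2)

namespace PF

/-- number of avoiders of `A` of size `n`, as a Finset card -/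
noncomputable def cnt (A : PF) (n : ℕ) : ℕ :=
  ((allPF n).filter (fun X => ¬ Contains X A)).card

lemma coeff_F (A : PF) (n : ℕ) :
    (PowerSeries.coeff n) (F A) = (cnt A n : ℚ) := by
  rw [F, PowerSeries.coeff_mk]
  congr 1
  rw [cnt, ← Set.ncard_coe_finset]
  congr 1
  ext X
  simp only [Finset.coe_filter, Set.mem_setOf_eq, mem_allPF, Av]
  tauto

lemma cnt_zero {A : PF} (hA : A ≠ nil) : cnt A 0 = 1 := by
  rw [cnt, allPF]
  rw [Finset.filter_singleton, if_pos, Finset.card_singleton]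
  intro h
  exact hA (contains_nil_left h)

lemma F_nil : F nil = 0 := by
  apply PowerSeries.ext
  intro n
  rw [coeff_F, map_zero, cnt]
  rw [Finset.filter_false_of_mem, Finset.card_empty, Nat.cast_zero]
  intro X _hX h
  exact h (contains_nil X)

lemma constantCoeff_F_ne (A : PF) (hA : A ≠ nil) :
    PowerSeries.constantCoeff (F A) = 1 := by
  have := coeff_F A 0
  rw [PowerSeries.coeff_zero_eq_constantCoeff] at this
  rw [this, cnt_zero hA, Nat.cast_one]

end PF
namespace PF

lemma F_arch (P : PF) : F (node P nil) = 1 + PowerSeries.X * (F P * F (node P nil)) := by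
  apply PowerSeries.ext
  intro n
  cases n with
  | zero =>
    rw [coeff_F, cnt_zero (fun h => PF.noConfusion h), Nat.cast_one, map_add,
      PowerSeries.coeff_zero_one, PowerSeries.coeff_zero_eq_constantCoeff, map_mul,
      PowerSeries.constantCoeff_X, zero_mul, add_zero]
  | succ n =>
    have hcnt : cnt (node P nil) (n+1) =
        ∑ k ∈ Finset.range (n+1), cnt P k * cnt (node P nil) (n-k) := by
      rw [cnt, filter_allPF_split (fun C => ¬ Contains C P)
        (fun R => ¬ Contains R (node P nil)) (fun _ => False) (fun _ => False) _ ?_ ?_ n]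
      · simp only [Finset.filter_false, Finset.card_empty, mul_zero, add_zero]
        rfl
      · intro C R
        rw [contains_arch_iff]
        constructor
        · intro h
          exact Or.inl ⟨fun hc => h (Or.inl hc), fun hr => h (Or.inr (Or.inr hr))⟩
        · rintro (⟨h1, h2⟩ | ⟨h, _⟩)
          · rintro (hc | hc | hr)
            · exact h1 hc
            · exact h1 (hc.trans' (arch_contains P))
            · exact h2 hr
          · exact h.elim
      · rintro C ⟨_, h⟩
        exact h
    rw [coeff_F, hcnt, map_add, PowerSeries.coeff_one, if_neg (Nat.succ_ne_zero n), zero_add,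
      PowerSeries.coeff_succ_X_mul, PowerSeries.coeff_mul,
      Finset.Nat.sum_antidiagonal_eq_sum_range_succ_mk, Nat.cast_sum]
    refine Finset.sum_congr rfl fun k _ => ?_
    rw [Nat.cast_mul, coeff_F, coeff_F]

lemma F_W (γ δ : PF) :
    F (node γ (node δ nil)) =
      1 + PowerSeries.X * (F γ * F (node γ (node δ nil))
        + (F (node γ (node δ nil)) - F γ) * F (node δ nil)) := by
  set W := node γ (node δ nil) with hW
  have hWγ : ∀ {C : PF}, Contains C W → Contains C γ :=
    fun h => h.trans' (W_contains_left γ δ)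
  have hWδ : ∀ {R : PF}, Contains R W → Contains R (node δ nil) :=
    fun h => h.trans' (W_contains_right γ δ)
  have hss : ∀ k, (allPF k).filter (fun C => ¬ Contains C γ) ⊆
      (allPF k).filter (fun C => ¬ Contains C W) := by
    intro k
    apply Finset.monotone_filter_right
    intro X _ h hw
    exact h (hWγ hw)
  have hle : ∀ k, cnt γ k ≤ cnt W k := fun k => Finset.card_le_card (hss k)
  have hsub : ∀ k, ((allPF k).filter fun C => ¬ Contains C W ∧ Contains C γ).card =
      cnt W k - cnt γ k := by
    intro k
    rw [cnt, cnt, ← Finset.card_sdiff_of_subset (hss k)]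
    congr 1
    ext X
    simp only [Finset.mem_filter, Finset.mem_sdiff, not_and, not_not]
    tauto
  apply PowerSeries.ext
  intro n
  cases n with
  | zero =>
    rw [coeff_F, cnt_zero (fun h => PF.noConfusion h), Nat.cast_one, map_add,
      PowerSeries.coeff_zero_one, PowerSeries.coeff_zero_eq_constantCoeff, map_mul,
      PowerSeries.constantCoeff_X, zero_mul, add_zero]
  | succ n =>
    have hcnt : cnt W (n+1) = ∑ k ∈ Finset.range (n+1),
        (cnt γ k * cnt W (n-k) + (cnt W k - cnt γ k) * cnt (node δ nil) (n-k)) := by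
      rw [cnt, filter_allPF_split (fun C => ¬ Contains C γ) (fun R => ¬ Contains R W)
        (fun C => ¬ Contains C W ∧ Contains C γ) (fun R => ¬ Contains R (node δ nil))
        _ ?_ ?_ n]
      · refine Finset.sum_congr rfl fun k _ => ?_
        rw [hsub k]
        rfl
      · intro C R
        rw [hW, contains_W_iff]
        constructor
        · intro h
          by_cases hcγ : Contains C γ
          · exact Or.inr ⟨⟨fun hc => h (Or.inl hc), hcγ⟩,
              fun hr => h (Or.inr (Or.inr ⟨hcγ, hr⟩))⟩
          · exact Or.inl ⟨hcγ, fun hr => h (Or.inr (Or.inl hr))⟩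
        · rintro (⟨h1, h2⟩ | ⟨⟨hcw, hcγ⟩, hrδ⟩)
          · rintro (hc | hr | ⟨hcγ, _⟩)
            · exact h1 (hWγ hc)
            · exact h2 hr
            · exact h1 hcγ
          · rintro (hc | hr | ⟨_, hr⟩)
            · exact hcw hc
            · exact hrδ (hWδ hr)
            · exact hrδ hr
      · rintro C ⟨h1, _, h2⟩
        exact h1 h2
    rw [coeff_F, hcnt, map_add, PowerSeries.coeff_one, if_neg (Nat.succ_ne_zero n), zero_add,
      PowerSeries.coeff_succ_X_mul, map_add, PowerSeries.coeff_mul, PowerSeries.coeff_mul,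
      ← Finset.sum_add_distrib, Finset.Nat.sum_antidiagonal_eq_sum_range_succ_mk, Nat.cast_sum]
    refine Finset.sum_congr rfl fun k hk => ?_
    rw [Nat.cast_add, Nat.cast_mul, Nat.cast_mul, Nat.cast_sub (hle k), map_sub,
      coeff_F, coeff_F, coeff_F, coeff_F]

end PF
namespace PF

lemma wilfEq_of_F_eq {A B : PF} (h : F A = F B) : WilfEq A B := by
  intro n
  have h2 := congrArg (PowerSeries.coeff n) h
  rw [F, F, PowerSeries.coeff_mk, PowerSeries.coeff_mk] at h2
  exact_mod_cast h2

lemma ne_zero_of_constantCoeff_one {g : PowerSeries ℚ}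
    (h : PowerSeries.constantCoeff g = 1) : g ≠ 0 := fun h0 => by
  rw [h0, map_zero] at h
  exact zero_ne_one h

end PF

open PowerSeries

/-- For any atoms `a` and `b` (possibly empty), `Av(a·(arch over b))` is
Wilf-equivalent to `Av(arch over (ba))`. -/
theorem wilfEq_arch_switch (a b : PF) (ha : a.AtomOrNil) (hb : b.AtomOrNil) :
    PF.WilfEq (a ++ PF.node b PF.nil) (PF.node (b ++ a) PF.nil) := by
  apply PF.wilfEq_of_F_eq
  rcases ha with rfl | ⟨c, rfl⟩
  · rw [PF.nil_append, PF.append_nil]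
  · rcases hb with rfl | ⟨d, rfl⟩
    · -- `a = node c nil`, `b = nil`
      show PF.F (PF.node c (PF.node PF.nil PF.nil)) = PF.F (PF.node (PF.node c PF.nil) PF.nil)
      set f := PF.F c with hf
      set r := PF.F (PF.node c PF.nil) with hr
      set p1 := PF.F (PF.node c (PF.node PF.nil PF.nil)) with hp1
      set p2 := PF.F (PF.node (PF.node c PF.nil) PF.nil) with hp2
      have h1' : r * (1 - X * f) = 1 := by linear_combination PF.F_arch c
      have ht : PF.F (PF.node PF.nil PF.nil) = 1 := by
        have := PF.F_arch PF.nil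
        rw [PF.F_nil] at this
        rw [this]; ring
      have h5' : p1 * (1 - X * f - X) = 1 - X * f := by
        have h5 := PF.F_W c PF.nil
        rw [ht] at h5
        linear_combination h5
      have h6' : p2 * (1 - X * r) = 1 := by linear_combination PF.F_arch (PF.node c PF.nil)
      have step : p1 * (1 - X * r) * (1 - X * f) = 1 - X * f := by
        linear_combination (-(X * p1)) * h1' + h5'
      have hp1' : p1 * (1 - X * r) = 1 := by
        calc p1 * (1 - X * r) = p1 * (1 - X * r) * (r * (1 - X * f)) := by rw [h1', mul_one]
          _ = p1 * (1 - X * r) * (1 - X * f) * r := by ring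
          _ = (1 - X * f) * r := by rw [step]
          _ = 1 := by linear_combination h1'
      calc p1 = p1 * (p2 * (1 - X * r)) := by rw [h6', mul_one]
        _ = p2 * (p1 * (1 - X * r)) := by ring
        _ = p2 := by rw [hp1', mul_one]
    · -- `a = node c nil`, `b = node d nil`
      show PF.F (PF.node c (PF.node (PF.node d PF.nil) PF.nil)) =
        PF.F (PF.node (PF.node d (PF.node c PF.nil)) PF.nil)
      set f := PF.F c with hf
      set e := PF.F d with he
      set r := PF.F (PF.node c PF.nil) with hrr
      set β := PF.F (PF.node d PF.nil) with hβ0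
      set t := PF.F (PF.node (PF.node d PF.nil) PF.nil) with ht0
      set q := PF.F (PF.node d (PF.node c PF.nil)) with hq0
      set p1 := PF.F (PF.node c (PF.node (PF.node d PF.nil) PF.nil)) with hp10
      set p2 := PF.F (PF.node (PF.node d (PF.node c PF.nil)) PF.nil) with hp20
      have h1 : r * (1 - X * f) = 1 := by linear_combination PF.F_arch c
      have hβ : β * (1 - X * e) = 1 := by linear_combination PF.F_arch d
      have ht : t * (1 - X * β) = 1 := by linear_combination PF.F_arch (PF.node d PF.nil)
      have h4 : q * (1 - X * e - X * r) = 1 - X * e * r := by linear_combination PF.F_W d c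
      have h5 : p1 * (1 - X * f - X * t) = 1 - X * f * t := by
        linear_combination PF.F_W c (PF.node d PF.nil)
      have h6 : p2 * (1 - X * q) = 1 := by
        linear_combination PF.F_arch (PF.node d (PF.node c PF.nil))
      have htw : t * (1 - X * e - X) = 1 - X * e := by
        linear_combination (1 - X * e) * ht + t * X * hβ
      have hq2 : q * ((1 - X * e) * (1 - X * f) - X) = (1 - X * f) - X * e := by
        linear_combination (1 - X * f) * h4 + X * q * h1 - X * e * h1
      have hp12 : p1 * ((1 - X * e) * (1 - X * f) - X * (1 - X * f) - X * (1 - X * e)) =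
          (1 - X * e) * (1 - X * f) - X := by
        linear_combination (1 - X * e - X) * h5 + X * p1 * htw - X * f * htw
      have h62 : p2 * ((1 - X * e) * (1 - X * f) - X * (1 - X * f) - X * (1 - X * e)) =
          (1 - X * e) * (1 - X * f) - X := by
        linear_combination ((1 - X * e) * (1 - X * f) - X) * h6 + X * p2 * hq2
      have nD : ((1 - X * e) * (1 - X * f) - X * (1 - X * f) - X * (1 - X * e) :
          PowerSeries ℚ) ≠ 0 :=
        PF.ne_zero_of_constantCoeff_one (by simp)
      exact mul_right_cancel₀ nD (hp12.trans h62.symm)
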